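/- Let F be a field of characteristic 2 and let α, β, γ, δ, b ∈ F with β ≠ 0, δ ≠ 0, and 1 + b²β ≠ 0. Then there is an F-algebra isomorphism [α, β) ⊗_F [γ, δ) ≅ [α + b²βγ/(1 + b²β), β) ⊗_F [γ, δ·(1 + b²β)). -/

import Mathlib

open scoped TensorProduct

/-- The relations defining the characteristic two quaternion symbol algebra `[α, β)`:
`x² + x = α`, `y² = β`, `xy + yx = y`. -/
inductive QuatSymbolRel (F : Type*) [CommRing F] (α β : F) :
    FreeAlgebra F (Fin 2) → FreeAlgebra F (Fin 2) → Prop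
  | x_rel : QuatSymbolRel F α β
      (FreeAlgebra.ι F (0 : Fin 2) * FreeAlgebra.ι F (0 : Fin 2) + FreeAlgebra.ι F (0 : Fin 2))
      (algebraMap F (FreeAlgebra F (Fin 2)) α)
  | y_rel : QuatSymbolRel F α β
      (FreeAlgebra.ι F (1 : Fin 2) * FreeAlgebra.ι F (1 : Fin 2))
      (algebraMap F (FreeAlgebra F (Fin 2)) β)
  | xy_rel : QuatSymbolRel F α β
      (FreeAlgebra.ι F (0 : Fin 2) * FreeAlgebra.ι F (1 : Fin 2) +
        FreeAlgebra.ι F (1 : Fin 2) * FreeAlgebra.ι F (0 : Fin 2))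
      (FreeAlgebra.ι F (1 : Fin 2))

/-- The characteristic two quaternion symbol algebra `[α, β)` over `F`: the `F`-algebra
generated by `x, y` subject to `x² + x = α`, `y² = β`, `xy + yx = y`. -/
def QuatSymbol (F : Type*) [CommRing F] (α β : F) :=
  RingQuot (QuatSymbolRel F α β)

noncomputable instance (F : Type*) [CommRing F] (α β : F) : Ring (QuatSymbol F α β) :=
  inferInstanceAs (Ring (RingQuot (QuatSymbolRel F α β)))

noncomputable instance (F : Type*) [CommRing F] (α β : F) : Algebra F (QuatSymbol F α β) :=
  inferInstanceAs (Algebra F (RingQuot (QuatSymbolRel F α β)))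

namespace QSAux

variable (F : Type*) [CommRing F] (α β : F)

noncomputable def X : QuatSymbol F α β :=
  RingQuot.mkAlgHom F (QuatSymbolRel F α β) (FreeAlgebra.ι F 0)

noncomputable def Y : QuatSymbol F α β :=
  RingQuot.mkAlgHom F (QuatSymbolRel F α β) (FreeAlgebra.ι F 1)

lemma X_rel : X F α β * X F α β + X F α β = (α : F) • (1 : QuatSymbol F α β) := by
  have h := RingQuot.mkAlgHom_rel F (QuatSymbolRel.x_rel (F := F) (α := α) (β := β))
  simp [X, map_add, map_mul, AlgHom.commutes, Algebra.algebraMap_eq_smul_one] at h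
  exact h

lemma Y_rel : Y F α β * Y F α β = (β : F) • (1 : QuatSymbol F α β) := by
  have h := RingQuot.mkAlgHom_rel F (QuatSymbolRel.y_rel (F := F) (α := α) (β := β))
  simp [Y, map_mul, AlgHom.commutes, Algebra.algebraMap_eq_smul_one] at h
  exact h

lemma XY_rel : X F α β * Y F α β + Y F α β * X F α β = Y F α β := by
  have h := RingQuot.mkAlgHom_rel F (QuatSymbolRel.xy_rel (F := F) (α := α) (β := β))
  simp [X, Y, map_add, map_mul] at h
  exact h

variable {B : Type*} [Ring B] [Algebra F B]

noncomputable def qlift (a c : B) (h1 : a * a + a = α • 1) (h2 : c * c = β • 1)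
    (h3 : a * c + c * a = c) : QuatSymbol F α β →ₐ[F] B :=
  RingQuot.liftAlgHom F ⟨FreeAlgebra.lift F ![a, c], by
    intro p q h
    induction h with
    | x_rel => simpa [Algebra.algebraMap_eq_smul_one] using h1
    | y_rel => simpa [Algebra.algebraMap_eq_smul_one] using h2
    | xy_rel => simpa using h3⟩

@[simp] lemma qlift_X (a c : B) (h1 : a * a + a = α • 1) (h2 : c * c = β • 1)
    (h3 : a * c + c * a = c) : qlift F α β a c h1 h2 h3 (X F α β) = a := by
  exact (RingQuot.liftAlgHom_mkAlgHom_apply _ _ _ _).trans (by simp)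

@[simp] lemma qlift_Y (a c : B) (h1 : a * a + a = α • 1) (h2 : c * c = β • 1)
    (h3 : a * c + c * a = c) : qlift F α β a c h1 h2 h3 (Y F α β) = c := by
  exact (RingQuot.liftAlgHom_mkAlgHom_apply _ _ _ _).trans (by simp)

lemma qhom_ext {f g : QuatSymbol F α β →ₐ[F] B}
    (hX : f (X F α β) = g (X F α β)) (hY : f (Y F α β) = g (Y F α β)) : f = g := by
  apply RingQuot.ringQuot_ext'
  apply FreeAlgebra.hom_ext
  funext i
  fin_cases i
  · exact hX
  · exact hY

lemma qinduction {p : QuatSymbol F α β → Prop}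
    (halg : ∀ r : F, p (algebraMap F _ r))
    (hX : p (X F α β)) (hY : p (Y F α β))
    (hmul : ∀ a b, p a → p b → p (a * b))
    (hadd : ∀ a b, p a → p b → p (a + b)) :
    ∀ q, p q := by
  intro q
  obtain ⟨a, rfl⟩ := RingQuot.mkAlgHom_surjective F (QuatSymbolRel F α β) q
  induction a with
  | grade0 r => rw [AlgHom.commutes]; exact halg r
  | grade1 i =>
    fin_cases i
    · exact hX
    · exact hY
  | mul a b ha hb => rw [map_mul]; exact hmul _ _ ha hb
  | add a b ha hb => rw [map_add]; exact hadd _ _ ha hb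

lemma commute_all (f : QuatSymbol F α β →ₐ[F] B) (z : B)
    (hX : Commute (f (X F α β)) z) (hY : Commute (f (Y F α β)) z) :
    ∀ q, Commute (f q) z := by
  refine qinduction F α β ?_ hX hY ?_ ?_
  · intro r
    rw [AlgHom.commutes]
    exact Algebra.commute_algebraMap_left r z
  · intro a c ha hc
    rw [map_mul]; exact ha.mul_left hc
  · intro a c ha hc
    rw [map_add]; exact ha.add_left hc

end QSAux


section Omega

variable {F B : Type*} [CommRing F] [Ring B] [Algebra F B]

structure QRels (α β γ δ : F) (x y u v : B) : Prop where
  hxx : x * x + x = α • 1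
  hyy : y * y = β • 1
  hxy : x * y + y * x = y
  huu : u * u + u = γ • 1
  hvv : v * v = δ • 1
  huv : u * v + v * u = v
  hxu : x * u = u * x
  hxv : x * v = v * x
  hyu : y * u = u * y
  hyv : y * v = v * y

lemma omega_step {α β γ δ : F} {x y u v : B} (b e inv : F)
    (h2 : (2 : F) = 0) (hinv : (1 + b ^ 2 * β) * inv = 1)
    (h : QRels α β γ δ x y u v) :
    QRels (α + b ^ 2 * β * γ * inv) β γ (e ^ 2 * δ * (1 + b ^ 2 * β))
      (x + (b * inv) • (y * u) + (b * inv * b * β) • u) y u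
      (e • v + (e * b) • (y * v)) := by
  obtain ⟨hxx, hyy, hxy, huu, hvv, huv, hxu, hxv, hyu, hyv⟩ := h
  have hBB : ∀ t : B, t + t = 0 := by
    intro t
    rw [← two_smul F t, h2, zero_smul]
  -- directed rules
  have dxx : x * x = x + α • 1 := by
    calc x * x = x * x + (x + x) := by rw [hBB, add_zero]
    _ = (x * x + x) + x := (add_assoc _ _ _).symm
    _ = x + α • 1 := by rw [hxx]; exact add_comm _ _
  have duu : u * u = u + γ • 1 := by
    calc u * u = u * u + (u + u) := by rw [hBB, add_zero]
    _ = (u * u + u) + u := (add_assoc _ _ _).symm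
    _ = u + γ • 1 := by rw [huu]; exact add_comm _ _
  have dyx : y * x = x * y + y := by
    have h' : x * y + (x * y + y * x) = x * y + y := by rw [hxy]
    rw [← add_assoc, hBB, zero_add] at h'
    exact h'
  have dvu : v * u = u * v + v := by
    have h' : u * v + (u * v + v * u) = u * v + v := by rw [huv]
    rw [← add_assoc, hBB, zero_add] at h'
    exact h'
  have dux : u * x = x * u := hxu.symm
  have duy : u * y = y * u := hyu.symm
  have dvx : v * x = x * v := hxv.symm
  have dvy : v * y = y * v := hyv.symm
  have dxx' : ∀ t : B, x * (x * t) = x * t + α • t := fun t => by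
    rw [← mul_assoc, dxx, add_mul, smul_mul_assoc, one_mul]
  have duu' : ∀ t : B, u * (u * t) = u * t + γ • t := fun t => by
    rw [← mul_assoc, duu, add_mul, smul_mul_assoc, one_mul]
  have dyy' : ∀ t : B, y * (y * t) = β • t := fun t => by
    rw [← mul_assoc, hyy, smul_mul_assoc, one_mul]
  have dvv' : ∀ t : B, v * (v * t) = δ • t := fun t => by
    rw [← mul_assoc, hvv, smul_mul_assoc, one_mul]
  have dyx' : ∀ t : B, y * (x * t) = x * (y * t) + y * t := fun t => by
    rw [← mul_assoc, dyx, add_mul, mul_assoc]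
  have dvu' : ∀ t : B, v * (u * t) = u * (v * t) + v * t := fun t => by
    rw [← mul_assoc, dvu, add_mul, mul_assoc]
  have dux' : ∀ t : B, u * (x * t) = x * (u * t) := fun t => by
    rw [← mul_assoc, dux, mul_assoc]
  have duy' : ∀ t : B, u * (y * t) = y * (u * t) := fun t => by
    rw [← mul_assoc, duy, mul_assoc]
  have dvx' : ∀ t : B, v * (x * t) = x * (v * t) := fun t => by
    rw [← mul_assoc, dvx, mul_assoc]
  have dvy' : ∀ t : B, v * (y * t) = y * (v * t) := fun t => by
    rw [← mul_assoc, dvy, mul_assoc]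
  constructor <;>
    simp only [mul_add, add_mul, smul_mul_assoc, mul_smul_comm, smul_add, smul_smul,
      mul_one, one_mul, mul_assoc, dxx, dxx', hyy, dyy', dyx, dyx', duu, duu', hvv, dvv',
      dvu, dvu', dux, dux', duy, duy', dvx, dvx', dvy, dvy']
  all_goals match_scalars
  all_goals try ring1
  · linear_combination h2
  · linear_combination (b^2*β*γ*inv) * hinv
  · linear_combination (b*inv) * h2
  · linear_combination (b*inv + b^3*inv^2*β) * h2
  · linear_combination (b^2*inv*β) * h2
  · linear_combination (b^2*inv*β) * h2 + (b^2*inv*β) * hinv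
  · linear_combination (b^3*inv^2*β*γ) * h2
  · linear_combination h2
  · linear_combination (b*inv*β) * h2
  · linear_combination (b^2*inv*β) * h2
  · linear_combination h2
  · linear_combination (e^2*b*δ) * h2
  · linear_combination e * h2
  · linear_combination (e*b) * h2
  · linear_combination (-(b*e)) * h2 + (-(b*e)) * hinv
  · linear_combination (-(b^2*inv*β*e)) * h2

end Omega

lemma commute_of_eq {M : Type*} [Mul M] {a b : M} (h : a * b = b * a) : Commute a b := h


open QSAux

set_option maxHeartbeats 1000000 in
/-- The `Ω_c` step on symbol presentations: with `1 + b²β ≠ 0`,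
`[α,β) ⊗ [γ,δ) ≅ [α + b²βγ/(1+b²β), β) ⊗ [γ, δ(1+b²β))`. -/
theorem quatSymbol_tensor_omegaC (F : Type*) [Field F] [CharP F 2] (α β γ δ b : F)
    (hβ : β ≠ 0) (hδ : δ ≠ 0) (hb : 1 + b ^ 2 * β ≠ 0) :
    Nonempty ((QuatSymbol F α β ⊗[F] QuatSymbol F γ δ) ≃ₐ[F]
      (QuatSymbol F (α + b ^ 2 * β * γ / (1 + b ^ 2 * β)) β ⊗[F]
        QuatSymbol F γ (δ * (1 + b ^ 2 * β)))) := by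
  classical
  have h2 : (2 : F) = 0 := by
    have := CharP.cast_eq_zero F 2
    simpa using this
  have hinv : (1 + b ^ 2 * β) * (1 + b ^ 2 * β)⁻¹ = 1 := mul_inv_cancel₀ hb
  -- source generators
  set xA : QuatSymbol F α β ⊗[F] QuatSymbol F γ δ := (X F α β) ⊗ₜ 1 with hxA
  set yA : QuatSymbol F α β ⊗[F] QuatSymbol F γ δ := (Y F α β) ⊗ₜ 1 with hyA
  set uA : QuatSymbol F α β ⊗[F] QuatSymbol F γ δ := 1 ⊗ₜ (X F γ δ) with huA
  set vA : QuatSymbol F α β ⊗[F] QuatSymbol F γ δ := 1 ⊗ₜ (Y F γ δ) with hvA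
  have hA : QRels α β γ δ xA yA uA vA := by
    constructor <;>
      simp only [hxA, hyA, huA, hvA, Algebra.TensorProduct.tmul_mul_tmul, one_mul, mul_one,
        ← TensorProduct.add_tmul, ← TensorProduct.tmul_add, X_rel, Y_rel, XY_rel,
        TensorProduct.smul_tmul', TensorProduct.tmul_smul, Algebra.TensorProduct.one_def]
  have hA1 := omega_step b 1 (1 + b ^ 2 * β)⁻¹ h2 hinv hA
  rw [show α + b ^ 2 * β * γ * (1 + b ^ 2 * β)⁻¹ = α + b ^ 2 * β * γ / (1 + b ^ 2 * β) by
        rw [div_eq_mul_inv],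
      show (1 : F) ^ 2 * δ * (1 + b ^ 2 * β) = δ * (1 + b ^ 2 * β) by ring] at hA1
  -- target generators
  set xT : QuatSymbol F (α + b ^ 2 * β * γ / (1 + b ^ 2 * β)) β ⊗[F]
      QuatSymbol F γ (δ * (1 + b ^ 2 * β)) := (X F _ _) ⊗ₜ 1 with hxT
  set yT : QuatSymbol F (α + b ^ 2 * β * γ / (1 + b ^ 2 * β)) β ⊗[F]
      QuatSymbol F γ (δ * (1 + b ^ 2 * β)) := (Y F _ _) ⊗ₜ 1 with hyT
  set uT : QuatSymbol F (α + b ^ 2 * β * γ / (1 + b ^ 2 * β)) β ⊗[F]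
      QuatSymbol F γ (δ * (1 + b ^ 2 * β)) := 1 ⊗ₜ (X F _ _) with huT
  set vT : QuatSymbol F (α + b ^ 2 * β * γ / (1 + b ^ 2 * β)) β ⊗[F]
      QuatSymbol F γ (δ * (1 + b ^ 2 * β)) := 1 ⊗ₜ (Y F _ _) with hvT
  have hT : QRels (α + b ^ 2 * β * γ / (1 + b ^ 2 * β)) β γ (δ * (1 + b ^ 2 * β)) xT yT uT vT := by
    constructor <;>
      simp only [hxT, hyT, huT, hvT, Algebra.TensorProduct.tmul_mul_tmul, one_mul, mul_one,
        ← TensorProduct.add_tmul, ← TensorProduct.tmul_add, X_rel, Y_rel, XY_rel,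
        TensorProduct.smul_tmul', TensorProduct.tmul_smul, Algebra.TensorProduct.one_def]
  have hT1 := omega_step b (1 + b ^ 2 * β)⁻¹ (1 + b ^ 2 * β)⁻¹ h2 hinv hT
  rw [show α + b ^ 2 * β * γ / (1 + b ^ 2 * β) + b ^ 2 * β * γ * (1 + b ^ 2 * β)⁻¹ = α by
        rw [div_eq_mul_inv]; linear_combination (b ^ 2 * β * γ * (1 + b ^ 2 * β)⁻¹) * h2,
      show ((1 + b ^ 2 * β)⁻¹) ^ 2 * (δ * (1 + b ^ 2 * β)) * (1 + b ^ 2 * β) = δ by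
        field_simp] at hT1
  -- forward hom components (target presentation realized inside the source algebra)
  set x1 := xA + (b * (1 + b ^ 2 * β)⁻¹) • (yA * uA) + (b * (1 + b ^ 2 * β)⁻¹ * b * β) • uA
    with hx1
  set v1 := (1 : F) • vA + ((1 : F) * b) • (yA * vA) with hv1
  set x2 := xT + (b * (1 + b ^ 2 * β)⁻¹) • (yT * uT) + (b * (1 + b ^ 2 * β)⁻¹ * b * β) • uT
    with hx2
  set v2 := (1 + b ^ 2 * β)⁻¹ • vT + ((1 + b ^ 2 * β)⁻¹ * b) • (yT * vT) with hv2
  set f₁ := qlift F (α + b ^ 2 * β * γ / (1 + b ^ 2 * β)) β x1 yA hA1.hxx hA1.hyy hA1.hxy with hf₁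
  set f₂ := qlift F γ (δ * (1 + b ^ 2 * β)) uA v1 hA1.huu hA1.hvv hA1.huv with hf₂
  have hf1X : f₁ (X F (α + b ^ 2 * β * γ / (1 + b ^ 2 * β)) β) = x1 := qlift_X ..
  have hf1Y : f₁ (Y F (α + b ^ 2 * β * γ / (1 + b ^ 2 * β)) β) = yA := qlift_Y ..
  have hf2X : f₂ (X F γ (δ * (1 + b ^ 2 * β))) = uA := qlift_X ..
  have hf2Y : f₂ (Y F γ (δ * (1 + b ^ 2 * β))) = v1 := qlift_Y ..
  have hfu : ∀ p, Commute (f₁ p) uA :=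
    commute_all F _ _ f₁ uA (by rw [hf1X]; exact commute_of_eq hA1.hxu)
      (by rw [hf1Y]; exact commute_of_eq hA1.hyu)
  have hfv : ∀ p, Commute (f₁ p) v1 :=
    commute_all F _ _ f₁ v1 (by rw [hf1X]; exact commute_of_eq hA1.hxv)
      (by rw [hf1Y]; exact commute_of_eq hA1.hyv)
  have hcF : ∀ p q, Commute (f₁ p) (f₂ q) := fun p q =>
    (commute_all F _ _ f₂ (f₁ p) (by rw [hf2X]; exact (hfu p).symm)
      (by rw [hf2Y]; exact (hfv p).symm) q).symm
  -- backward hom components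
  set g₁ := qlift F α β x2 yT hT1.hxx hT1.hyy hT1.hxy with hg₁
  set g₂ := qlift F γ δ uT v2 hT1.huu hT1.hvv hT1.huv with hg₂
  have hg1X : g₁ (X F α β) = x2 := qlift_X ..
  have hg1Y : g₁ (Y F α β) = yT := qlift_Y ..
  have hg2X : g₂ (X F γ δ) = uT := qlift_X ..
  have hg2Y : g₂ (Y F γ δ) = v2 := qlift_Y ..
  have hgu : ∀ p, Commute (g₁ p) uT :=
    commute_all F _ _ g₁ uT (by rw [hg1X]; exact commute_of_eq hT1.hxu)
      (by rw [hg1Y]; exact commute_of_eq hT1.hyu)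
  have hgv : ∀ p, Commute (g₁ p) v2 :=
    commute_all F _ _ g₁ v2 (by rw [hg1X]; exact commute_of_eq hT1.hxv)
      (by rw [hg1Y]; exact commute_of_eq hT1.hyv)
  have hcG : ∀ p q, Commute (g₁ p) (g₂ q) := fun p q =>
    (commute_all F _ _ g₂ (g₁ p) (by rw [hg2X]; exact (hgu p).symm)
      (by rw [hg2Y]; exact (hgv p).symm) q).symm
  set Φ := Algebra.TensorProduct.lift f₁ f₂ hcF with hΦ
  set Ψ := Algebra.TensorProduct.lift g₁ g₂ hcG with hΨ
  -- values of the lifted maps on generators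
  have hΦxT : Φ xT = x1 := by rw [hxT, hΦ]; simp [Algebra.TensorProduct.lift_tmul, hf1X]
  have hΦyT : Φ yT = yA := by rw [hyT, hΦ]; simp [Algebra.TensorProduct.lift_tmul, hf1Y]
  have hΦuT : Φ uT = uA := by rw [huT, hΦ]; simp [Algebra.TensorProduct.lift_tmul, hf2X]
  have hΦvT : Φ vT = v1 := by rw [hvT, hΦ]; simp [Algebra.TensorProduct.lift_tmul, hf2Y]
  have hΨxA : Ψ xA = x2 := by rw [hxA, hΨ]; simp [Algebra.TensorProduct.lift_tmul, hg1X]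
  have hΨyA : Ψ yA = yT := by rw [hyA, hΨ]; simp [Algebra.TensorProduct.lift_tmul, hg1Y]
  have hΨuA : Ψ uA = uT := by rw [huA, hΨ]; simp [Algebra.TensorProduct.lift_tmul, hg2X]
  have hΨvA : Ψ vA = v2 := by rw [hvA, hΨ]; simp [Algebra.TensorProduct.lift_tmul, hg2Y]
  have hyTyT : yT * yT = β • 1 := hT.hyy
  have hyAyA : yA * yA = β • 1 := hA.hyy
  refine ⟨AlgEquiv.ofAlgHom Ψ Φ ?_ ?_⟩
  · -- Ψ ∘ Φ = id on T
    apply Algebra.TensorProduct.ext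
    · apply qhom_ext
      · show Ψ (Φ ((X F _ _) ⊗ₜ 1)) = (X F _ _) ⊗ₜ 1
        rw [← hxT, hΦxT, hx1, map_add, map_add, map_smul, map_smul, map_mul,
          hΨxA, hΨyA, hΨuA, hx2]
        match_scalars <;>
          first
            | ring1
            | linear_combination (b * (1 + b ^ 2 * β)⁻¹) * h2
            | linear_combination (b ^ 2 * β * (1 + b ^ 2 * β)⁻¹) * h2
      · show Ψ (Φ ((Y F _ _) ⊗ₜ 1)) = (Y F _ _) ⊗ₜ 1
        rw [← hyT, hΦyT, hΨyA]
    · apply qhom_ext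
      · show Ψ (Φ (1 ⊗ₜ (X F _ _))) = 1 ⊗ₜ (X F _ _)
        rw [← huT, hΦuT, hΨuA]
      · show Ψ (Φ (1 ⊗ₜ (Y F _ _))) = 1 ⊗ₜ (Y F _ _)
        rw [← hvT, hΦvT, hv1, map_add, map_smul, map_smul, map_mul, hΨyA, hΨvA, hv2]
        have hy2 : yT * (yT * vT) = β • vT := by
          rw [← mul_assoc, hyTyT, smul_mul_assoc, one_mul]
        simp only [smul_add, mul_add, mul_smul_comm, smul_smul, hy2]
        match_scalars <;>
          first
            | ring1
            | linear_combination hinv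
            | linear_combination ((1 + b ^ 2 * β)⁻¹ * b) * h2
  · -- Φ ∘ Ψ = id on A
    apply Algebra.TensorProduct.ext
    · apply qhom_ext
      · show Φ (Ψ ((X F _ _) ⊗ₜ 1)) = (X F _ _) ⊗ₜ 1
        rw [← hxA, hΨxA, hx2, map_add, map_add, map_smul, map_smul, map_mul,
          hΦxT, hΦyT, hΦuT, hx1]
        match_scalars <;>
          first
            | ring1
            | linear_combination (b * (1 + b ^ 2 * β)⁻¹) * h2
            | linear_combination (b ^ 2 * β * (1 + b ^ 2 * β)⁻¹) * h2
      · show Φ (Ψ ((Y F _ _) ⊗ₜ 1)) = (Y F _ _) ⊗ₜ 1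
        rw [← hyA, hΨyA, hΦyT]
    · apply qhom_ext
      · show Φ (Ψ (1 ⊗ₜ (X F _ _))) = 1 ⊗ₜ (X F _ _)
        rw [← huA, hΨuA, hΦuT]
      · show Φ (Ψ (1 ⊗ₜ (Y F _ _))) = 1 ⊗ₜ (Y F _ _)
        rw [← hvA, hΨvA, hv2, map_add, map_smul, map_smul, map_mul, hΦyT, hΦvT, hv1]
        have hy2 : yA * (yA * vA) = β • vA := by
          rw [← mul_assoc, hyAyA, smul_mul_assoc, one_mul]
        simp only [smul_add, mul_add, mul_smul_comm, smul_smul, hy2]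
        match_scalars <;>
          first
            | ring1
            | linear_combination hinv
            | linear_combination ((1 + b ^ 2 * β)⁻¹ * b) * h2
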